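/- Under the same setup, if in addition f is λ_min-strongly convex in the sense that ⟨∇f(θ₁)-∇f(θ₂), θ₁-θ₂⟩ ≥ λ_min|θ₁-θ₂|² for all θ₁, θ₂, then R_{k+1} - R_k ≤ [-2ηλ_min + η²(λ₀² + Λ² - λ_min²)] R_k + 2η²Λ D₀ √(R_k) + η² D₀². -/

import Mathlib

open MeasureTheory
open scoped ENNReal
set_option maxHeartbeats 1000000 in

theorem stmt_6
    (d J : ℕ) (hJ : 0 < J)
    (f : EuclideanSpace ℝ (Fin d) → ℝ) (fj : Fin J → EuclideanSpace ℝ (Fin d) → ℝ)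
    (hdiff : ∀ x, DifferentiableAt ℝ f x)
    (hdiffj : ∀ j x, DifferentiableAt ℝ (fj j) x)
    (hsum : ∀ x, gradient f x = (J : ℝ)⁻¹ • ∑ j, gradient (fj j) x)
    (lam₀ : ℝ) (lamj : Fin J → ℝ) (hlam₀ : 0 < lam₀)
    (hLip : ∀ x y, ‖gradient f x - gradient f y‖ ≤ lam₀ * ‖x - y‖)
    (hLipj : ∀ j x y, ‖gradient (fj j) x - gradient (fj j) y‖ ≤ lamj j * ‖x - y‖)
    (θdag : EuclideanSpace ℝ (Fin d)) (hθdag : gradient f θdag = 0)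
    (D₀ Λ : ℝ)
    (hD₀ : D₀ = Real.sqrt ((J : ℝ)⁻¹ * ∑ j, ‖gradient (fj j) θdag‖ ^ 2))
    (hΛ : Λ = Real.sqrt ((J : ℝ)⁻¹ * ∑ j, (lamj j) ^ 2))
    (η : ℝ) (hη : 0 < η) (hηlam : η < 1 / lam₀)
    (Ω : Type*) [MeasurableSpace Ω] (μ : Measure Ω) [IsProbabilityMeasure μ]
    (γ : ℕ → Ω → Fin J) (θ : ℕ → Ω → EuclideanSpace ℝ (Fin d))
    (hγmeas : ∀ k, Measurable (γ k)) (hθmeas : ∀ k, Measurable (θ k))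
    (hunif : ∀ k j, μ {ω | γ k ω = j} = (J : ℝ≥0∞)⁻¹)
    (hindep : ∀ k, ProbabilityTheory.IndepFun (γ k) (θ k) μ)
    (hSGD : ∀ k ω, θ (k + 1) ω = θ k ω - η • gradient (fj (γ k ω)) (θ k ω))
    (R : ℕ → ℝ) (hR : ∀ k, R k = ∫ ω, ‖θ k ω - θdag‖ ^ 2 ∂μ)
    (hint : ∀ k, Integrable (fun ω => ‖θ k ω - θdag‖ ^ 2) μ)
    (lammin : ℝ) (hlammin : 0 < lammin)
    (hconv : ∀ θ₁ θ₂ : EuclideanSpace ℝ (Fin d),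
      (inner ℝ (gradient f θ₁ - gradient f θ₂) (θ₁ - θ₂) : ℝ) ≥ lammin * ‖θ₁ - θ₂‖ ^ 2) :
    ∀ k, R (k + 1) - R k ≤
      (-2 * η * lammin + η ^ 2 * (lam₀ ^ 2 + Λ ^ 2 - lammin ^ 2)) * R k
      + 2 * η ^ 2 * Λ * D₀ * Real.sqrt (R k) + η ^ 2 * D₀ ^ 2 := by
  intro k
  classical
  have hΛ0 : 0 ≤ Λ := by rw [hΛ]; exact Real.sqrt_nonneg _
  have hD0 : 0 ≤ D₀ := by rw [hD₀]; exact Real.sqrt_nonneg _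
  have hΛsq : Λ ^ 2 = (J : ℝ)⁻¹ * ∑ j, (lamj j) ^ 2 := by
    rw [hΛ, Real.sq_sqrt]; positivity
  have hDsq : D₀ ^ 2 = (J : ℝ)⁻¹ * ∑ j, ‖gradient (fj j) θdag‖ ^ 2 := by
    rw [hD₀, Real.sq_sqrt]; positivity
  -- continuity of individual gradients
  have hGcont : ∀ j, Continuous (fun x => gradient (fj j) x) := by
    intro j
    refine LipschitzWith.continuous (K := Real.toNNReal |lamj j|) ?_
    refine LipschitzWith.of_dist_le_mul fun x y => ?_
    rw [dist_eq_norm, dist_eq_norm, Real.coe_toNNReal _ (abs_nonneg _)]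
    exact (hLipj j x y).trans
      (mul_le_mul_of_nonneg_right (le_abs_self _) (norm_nonneg _))
  -- bound on the gradient norm
  have hGbound : ∀ j x, ‖gradient (fj j) x‖ ≤ lamj j * ‖x - θdag‖ + ‖gradient (fj j) θdag‖ := by
    intro j x
    calc ‖gradient (fj j) x‖ = ‖(gradient (fj j) x - gradient (fj j) θdag) + gradient (fj j) θdag‖ := by rw [sub_add_cancel]
      _ ≤ ‖gradient (fj j) x - gradient (fj j) θdag‖ + ‖gradient (fj j) θdag‖ := norm_add_le _ _
      _ ≤ lamj j * ‖x - θdag‖ + ‖gradient (fj j) θdag‖ := by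
          exact add_le_add_left (hLipj j x θdag) _
  set ψ : Fin J → EuclideanSpace ℝ (Fin d) → ℝ :=
    fun j x => -(2 * η) * (inner ℝ (gradient (fj j) x) (x - θdag) : ℝ) + η ^ 2 * ‖gradient (fj j) x‖ ^ 2 with hψdef
  have hψcont : ∀ j, Continuous (ψ j) := by
    intro j
    exact (continuous_const.mul
        ((hGcont j).inner (continuous_id.sub continuous_const))).add
      (continuous_const.mul (((hGcont j).norm).pow 2))
  -- key pointwise identity
  have key : ∀ ω, ‖θ (k + 1) ω - θdag‖ ^ 2 = ‖θ k ω - θdag‖ ^ 2 + ψ (γ k ω) (θ k ω) := by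
    intro ω
    have h1 : θ (k + 1) ω - θdag = (θ k ω - θdag) - η • gradient (fj (γ k ω)) (θ k ω) := by
      rw [hSGD]; abel
    rw [h1, norm_sub_sq_real, real_inner_smul_right, norm_smul, Real.norm_eq_abs, mul_pow,
      sq_abs, real_inner_comm]
    simp only [hψdef]
    ring
  -- pointwise average bound
  have avg : ∀ x : EuclideanSpace ℝ (Fin d), (J : ℝ)⁻¹ * ∑ j, ψ j x ≤
      (-2 * η * lammin + η ^ 2 * (lam₀ ^ 2 + Λ ^ 2 - lammin ^ 2)) * ‖x - θdag‖ ^ 2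
        + 2 * η ^ 2 * Λ * D₀ * ‖x - θdag‖ + η ^ 2 * D₀ ^ 2 := by
    intro x
    have hr : (0:ℝ) ≤ ‖x - θdag‖ := norm_nonneg _
    have h1 : (J : ℝ)⁻¹ * ∑ j, (inner ℝ (gradient (fj j) x) (x - θdag) : ℝ)
        = (inner ℝ (gradient f x) (x - θdag) : ℝ) := by
      rw [hsum x, real_inner_smul_left, sum_inner]
    have h2 : lammin * ‖x - θdag‖ ^ 2 ≤ (inner ℝ (gradient f x) (x - θdag) : ℝ) := by
      have := hconv x θdag
      rwa [hθdag, sub_zero] at this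
    have h4 : ∀ j, ‖gradient (fj j) x‖ ^ 2 ≤
        (lamj j) ^ 2 * ‖x - θdag‖ ^ 2 + (lamj j * ‖gradient (fj j) θdag‖) * (2 * ‖x - θdag‖)
          + ‖gradient (fj j) θdag‖ ^ 2 := by
      intro j
      have h := pow_le_pow_left₀ (norm_nonneg (gradient (fj j) x)) (hGbound j x) 2
      nlinarith [h]
    have hcs : (J : ℝ)⁻¹ * ∑ j, lamj j * ‖gradient (fj j) θdag‖ ≤ Λ * D₀ := by
      have h := Finset.sum_mul_sq_le_sq_mul_sq Finset.univ lamj (fun j => ‖gradient (fj j) θdag‖)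
      have hsq : ((J : ℝ)⁻¹ * ∑ j, lamj j * ‖gradient (fj j) θdag‖) ^ 2 ≤ (Λ * D₀) ^ 2 := by
        have hJ2 : (0:ℝ) ≤ ((J : ℝ)⁻¹) ^ 2 := sq_nonneg _
        calc ((J : ℝ)⁻¹ * ∑ j, lamj j * ‖gradient (fj j) θdag‖) ^ 2
            = ((J : ℝ)⁻¹) ^ 2 * (∑ j, lamj j * ‖gradient (fj j) θdag‖) ^ 2 := by ring
          _ ≤ ((J : ℝ)⁻¹) ^ 2 * ((∑ j, (lamj j) ^ 2) * ∑ j, ‖gradient (fj j) θdag‖ ^ 2) := by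
              exact mul_le_mul_of_nonneg_left h hJ2
          _ = (Λ * D₀) ^ 2 := by rw [mul_pow, hΛsq, hDsq]; ring
      by_contra hlt
      push_neg at hlt
      have := pow_lt_pow_left₀ hlt (mul_nonneg hΛ0 hD0) two_ne_zero
      linarith
    have h5 : (J : ℝ)⁻¹ * ∑ j, ‖gradient (fj j) x‖ ^ 2 ≤
        Λ ^ 2 * ‖x - θdag‖ ^ 2 + 2 * (Λ * D₀) * ‖x - θdag‖ + D₀ ^ 2 := by
      have hsumle : (J : ℝ)⁻¹ * ∑ j, ‖gradient (fj j) x‖ ^ 2 ≤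
          ((J : ℝ)⁻¹ * ∑ j, (lamj j) ^ 2) * ‖x - θdag‖ ^ 2
            + ((J : ℝ)⁻¹ * ∑ j, lamj j * ‖gradient (fj j) θdag‖) * (2 * ‖x - θdag‖)
            + (J : ℝ)⁻¹ * ∑ j, ‖gradient (fj j) θdag‖ ^ 2 := by
        have hs : ∑ j, ‖gradient (fj j) x‖ ^ 2 ≤
            (∑ j, (lamj j) ^ 2) * ‖x - θdag‖ ^ 2
              + (∑ j, lamj j * ‖gradient (fj j) θdag‖) * (2 * ‖x - θdag‖)
              + ∑ j, ‖gradient (fj j) θdag‖ ^ 2 := by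
          calc ∑ j, ‖gradient (fj j) x‖ ^ 2
              ≤ ∑ j, ((lamj j) ^ 2 * ‖x - θdag‖ ^ 2
                + (lamj j * ‖gradient (fj j) θdag‖) * (2 * ‖x - θdag‖)
                + ‖gradient (fj j) θdag‖ ^ 2) := Finset.sum_le_sum fun j _ => h4 j
            _ = _ := by
                rw [Finset.sum_add_distrib, Finset.sum_add_distrib, Finset.sum_mul,
                  Finset.sum_mul]
        have hJpos : (0:ℝ) ≤ (J : ℝ)⁻¹ := by positivity
        have := mul_le_mul_of_nonneg_left hs hJpos
        calc (J : ℝ)⁻¹ * ∑ j, ‖gradient (fj j) x‖ ^ 2 ≤ _ := this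
          _ = _ := by ring
      calc (J : ℝ)⁻¹ * ∑ j, ‖gradient (fj j) x‖ ^ 2 ≤ _ := hsumle
        _ ≤ Λ ^ 2 * ‖x - θdag‖ ^ 2 + 2 * (Λ * D₀) * ‖x - θdag‖ + D₀ ^ 2 := by
            rw [hΛsq, hDsq]
            have := mul_le_mul_of_nonneg_right hcs hr
            nlinarith [this]
    have h6 : lammin ^ 2 * ‖x - θdag‖ ^ 2 ≤ lam₀ ^ 2 * ‖x - θdag‖ ^ 2 := by
      rcases eq_or_lt_of_le hr with h0 | h0
      · rw [← h0]; simp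
      · have hml : lammin * ‖x - θdag‖ ^ 2 ≤ lam₀ * ‖x - θdag‖ ^ 2 := by
          calc lammin * ‖x - θdag‖ ^ 2 ≤ (inner ℝ (gradient f x) (x - θdag) : ℝ) := h2
            _ ≤ ‖gradient f x‖ * ‖x - θdag‖ := real_inner_le_norm _ _
            _ = ‖gradient f x - gradient f θdag‖ * ‖x - θdag‖ := by
                rw [hθdag, sub_zero]
            _ ≤ (lam₀ * ‖x - θdag‖) * ‖x - θdag‖ :=
                mul_le_mul_of_nonneg_right (hLip x θdag) hr
            _ = lam₀ * ‖x - θdag‖ ^ 2 := by ring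
        have hr2 : (0:ℝ) < ‖x - θdag‖ ^ 2 := by positivity
        have hlm : lammin ≤ lam₀ := le_of_mul_le_mul_right hml hr2
        nlinarith [hlammin.le, hr2.le]
    have hsplit : (J : ℝ)⁻¹ * ∑ j, ψ j x =
        -(2 * η) * ((J : ℝ)⁻¹ * ∑ j, (inner ℝ (gradient (fj j) x) (x - θdag) : ℝ))
          + η ^ 2 * ((J : ℝ)⁻¹ * ∑ j, ‖gradient (fj j) x‖ ^ 2) := by
      simp only [hψdef]
      rw [Finset.sum_add_distrib, ← Finset.mul_sum, ← Finset.mul_sum]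
      ring
    rw [hsplit, h1]
    have t1 : -(2 * η) * (inner ℝ (gradient f x) (x - θdag) : ℝ)
        ≤ -(2 * η) * (lammin * ‖x - θdag‖ ^ 2) := by nlinarith [h2, hη]
    have t2 := mul_le_mul_of_nonneg_left h5 (sq_nonneg η)
    have t3 := mul_le_mul_of_nonneg_left h6 (sq_nonneg η)
    nlinarith [t1, t2, t3]
  -- measurability / integrability
  have hrmeas : Measurable fun ω => ‖θ k ω - θdag‖ :=
    ((hθmeas k).sub measurable_const).norm
  have hr2int : Integrable (fun ω => ‖θ k ω - θdag‖ ^ 2) μ := hint k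
  have hrint : Integrable (fun ω => ‖θ k ω - θdag‖) μ := by
    have hb : Integrable (fun ω => 1 + ‖θ k ω - θdag‖ ^ 2) μ := by
      exact (integrable_const (1:ℝ)).add hr2int
    refine Integrable.mono' hb hrmeas.aestronglyMeasurable ?_
    filter_upwards with ω
    rw [Real.norm_eq_abs, abs_of_nonneg (norm_nonneg _)]
    nlinarith [sq_nonneg (‖θ k ω - θdag‖ - 1)]
  have hψint : ∀ j, Integrable (fun ω => ψ j (θ k ω)) μ := by
    intro j
    have hb : Integrable (fun ω =>
        (2 * η * |lamj j| + 2 * η ^ 2 * (lamj j) ^ 2) * ‖θ k ω - θdag‖ ^ 2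
          + (2 * η * ‖gradient (fj j) θdag‖) * ‖θ k ω - θdag‖
          + 2 * η ^ 2 * ‖gradient (fj j) θdag‖ ^ 2) μ := by
      exact ((hr2int.const_mul _).add (hrint.const_mul _)).add (integrable_const _)
    refine Integrable.mono' hb
      (((hψcont j).measurable.comp (hθmeas k)).aestronglyMeasurable) ?_
    filter_upwards with ω
    have hg : ‖gradient (fj j) (θ k ω)‖ ≤ |lamj j| * ‖θ k ω - θdag‖ + ‖gradient (fj j) θdag‖ :=
      (hGbound j (θ k ω)).trans
        (add_le_add_left (mul_le_mul_of_nonneg_right (le_abs_self _) (norm_nonneg _)) _)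
    have hi := abs_le.mp (abs_real_inner_le_norm (gradient (fj j) (θ k ω)) (θ k ω - θdag))
    have hgr : (0:ℝ) ≤ |lamj j| * ‖θ k ω - θdag‖ + ‖gradient (fj j) θdag‖ :=
      add_nonneg (mul_nonneg (abs_nonneg _) (norm_nonneg _)) (norm_nonneg _)
    have hg2 : ‖gradient (fj j) (θ k ω)‖ ^ 2
        ≤ (|lamj j| * ‖θ k ω - θdag‖ + ‖gradient (fj j) θdag‖) ^ 2 := by
      nlinarith [hg, norm_nonneg (gradient (fj j) (θ k ω)), hgr]
    have hg2' : η ^ 2 * ‖gradient (fj j) (θ k ω)‖ ^ 2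
        ≤ η ^ 2 * (|lamj j| * ‖θ k ω - θdag‖ + ‖gradient (fj j) θdag‖) ^ 2 :=
      mul_le_mul_of_nonneg_left hg2 (sq_nonneg η)
    have hg3 : ‖gradient (fj j) (θ k ω)‖ * ‖θ k ω - θdag‖
        ≤ (|lamj j| * ‖θ k ω - θdag‖ + ‖gradient (fj j) θdag‖) * ‖θ k ω - θdag‖ :=
      mul_le_mul_of_nonneg_right hg (norm_nonneg _)
    have hg3' : 2 * η * (‖gradient (fj j) (θ k ω)‖ * ‖θ k ω - θdag‖)
        ≤ 2 * η * ((|lamj j| * ‖θ k ω - θdag‖ + ‖gradient (fj j) θdag‖) * ‖θ k ω - θdag‖) := by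
      nlinarith [hg3, hη]
    have hii : -(‖gradient (fj j) (θ k ω)‖ * ‖θ k ω - θdag‖)
          ≤ (inner ℝ (gradient (fj j) (θ k ω)) (θ k ω - θdag) : ℝ)
        ∧ (inner ℝ (gradient (fj j) (θ k ω)) (θ k ω - θdag) : ℝ)
          ≤ ‖gradient (fj j) (θ k ω)‖ * ‖θ k ω - θdag‖ := hi
    have u1 : -(2 * η) * (inner ℝ (gradient (fj j) (θ k ω)) (θ k ω - θdag) : ℝ)
        ≤ 2 * η * (‖gradient (fj j) (θ k ω)‖ * ‖θ k ω - θdag‖) := by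
      nlinarith [hii.1, hη]
    have l1 : -(2 * η) * (‖gradient (fj j) (θ k ω)‖ * ‖θ k ω - θdag‖)
        ≤ -(2 * η) * (inner ℝ (gradient (fj j) (θ k ω)) (θ k ω - θdag) : ℝ) := by
      nlinarith [hii.2, hη]
    have hn1 : (0:ℝ) ≤ η ^ 2 * ‖gradient (fj j) (θ k ω)‖ ^ 2 := by positivity
    have hn2 : (0:ℝ) ≤ 2 * η ^ 2 * (lamj j) ^ 2 * ‖θ k ω - θdag‖ ^ 2 := by positivity
    have hn3 : (0:ℝ) ≤ 2 * η ^ 2 * ‖gradient (fj j) θdag‖ ^ 2 := by positivity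
    simp only [hψdef]
    rw [Real.norm_eq_abs, abs_le]
    constructor
    · nlinarith [l1, hg3', hn1, hn2, hn3]
    · have hsq : η ^ 2 * (|lamj j| * ‖θ k ω - θdag‖ + ‖gradient (fj j) θdag‖) ^ 2
          ≤ 2 * η ^ 2 * (lamj j) ^ 2 * ‖θ k ω - θdag‖ ^ 2
            + 2 * η ^ 2 * ‖gradient (fj j) θdag‖ ^ 2 := by
        have habs2 : η ^ 2 * ‖θ k ω - θdag‖ ^ 2 * |lamj j| ^ 2
            = η ^ 2 * ‖θ k ω - θdag‖ ^ 2 * (lamj j) ^ 2 := by rw [sq_abs]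
        nlinarith [sq_nonneg (η * (|lamj j| * ‖θ k ω - θdag‖ - ‖gradient (fj j) θdag‖)), habs2]
      nlinarith [u1, hg2', hg3', hsq]
  have hχint : ∀ j : Fin J,
      Integrable (fun ω => (if γ k ω = j then (1:ℝ) else 0) * ψ j (θ k ω)) μ := by
    intro j
    refine Integrable.mono' (hψint j).abs
      (AEStronglyMeasurable.mul ?_ ((hψint j).1)) ?_
    · exact ((measurable_from_top (f := fun i : Fin J => if i = j then (1:ℝ) else 0)).comp
        (hγmeas k)).aestronglyMeasurable
    · filter_upwards with ω
      rw [Real.norm_eq_abs, abs_mul]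
      split_ifs with h <;> simp [abs_of_nonneg]
  have hdecomp : ∀ ω, ψ (γ k ω) (θ k ω)
      = ∑ j, (if γ k ω = j then (1:ℝ) else 0) * ψ j (θ k ω) := by
    intro ω
    rw [Finset.sum_eq_single (γ k ω)]
    · simp
    · intro b _ hb
      simp [Ne.symm hb]
    · simp
  have hψγint : Integrable (fun ω => ψ (γ k ω) (θ k ω)) μ := by
    have heq : (fun ω => ψ (γ k ω) (θ k ω))
        = fun ω => ∑ j, (if γ k ω = j then (1:ℝ) else 0) * ψ j (θ k ω) := funext hdecomp
    rw [heq]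
    exact integrable_finset_sum _ fun j _ => hχint j
  -- recursion for R
  have hRrec : R (k + 1) - R k = ∫ ω, ψ (γ k ω) (θ k ω) ∂μ := by
    have h1 : ∫ ω, ‖θ (k + 1) ω - θdag‖ ^ 2 ∂μ
        = ∫ ω, (‖θ k ω - θdag‖ ^ 2 + ψ (γ k ω) (θ k ω)) ∂μ := by
      refine integral_congr_ae ?_
      filter_upwards with ω
      exact key ω
    rw [hR, hR, h1, integral_add (hint k) hψγint]
    ring
  -- independence step
  have hmul : ∀ j : Fin J, ∫ ω, (if γ k ω = j then (1:ℝ) else 0) * ψ j (θ k ω) ∂μ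
      = (J : ℝ)⁻¹ * ∫ ω, ψ j (θ k ω) ∂μ := by
    intro j
    have hind : ProbabilityTheory.IndepFun (fun ω => if γ k ω = j then (1:ℝ) else 0)
        (fun ω => ψ j (θ k ω)) μ :=
      (hindep k).comp (φ := fun i => if i = j then (1:ℝ) else 0) (ψ := fun x => ψ j x)
        measurable_from_top ((hψcont j).measurable)
    rw [hind.integral_fun_mul_eq_mul_integral
      (((measurable_from_top (f := fun i : Fin J => if i = j then (1:ℝ) else 0)).comp
        (hγmeas k)).aestronglyMeasurable)
      (((hψcont j).measurable.comp (hθmeas k)).aestronglyMeasurable)]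
    congr 1
    have hset : MeasurableSet {ω | γ k ω = j} := by
      have : {ω | γ k ω = j} = γ k ⁻¹' {j} := by ext ω; simp
      rw [this]
      exact (hγmeas k) (measurableSet_singleton j)
    have heq : (fun ω => if γ k ω = j then (1:ℝ) else 0)
        = Set.indicator {ω | γ k ω = j} fun _ => (1:ℝ) := by
      funext ω
      simp [Set.indicator_apply, Set.mem_setOf_eq]
    rw [heq, integral_indicator_const (1:ℝ) hset, measureReal_def, hunif k j, smul_eq_mul, mul_one,
      ENNReal.toReal_inv]
    simp
  -- main identity
  have hmain : ∫ ω, ψ (γ k ω) (θ k ω) ∂μ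
      = ∫ ω, (J : ℝ)⁻¹ * ∑ j, ψ j (θ k ω) ∂μ := by
    calc ∫ ω, ψ (γ k ω) (θ k ω) ∂μ
        = ∫ ω, ∑ j, (if γ k ω = j then (1:ℝ) else 0) * ψ j (θ k ω) ∂μ := by
          refine integral_congr_ae ?_
          filter_upwards with ω
          exact hdecomp ω
      _ = ∑ j, ∫ ω, (if γ k ω = j then (1:ℝ) else 0) * ψ j (θ k ω) ∂μ :=
          integral_finset_sum _ fun j _ => hχint j
      _ = ∑ j, (J : ℝ)⁻¹ * ∫ ω, ψ j (θ k ω) ∂μ := Finset.sum_congr rfl fun j _ => hmul j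
      _ = (J : ℝ)⁻¹ * ∑ j, ∫ ω, ψ j (θ k ω) ∂μ := by rw [Finset.mul_sum]
      _ = (J : ℝ)⁻¹ * ∫ ω, ∑ j, ψ j (θ k ω) ∂μ := by
          rw [integral_finset_sum _ fun j _ => hψint j]
      _ = ∫ ω, (J : ℝ)⁻¹ * ∑ j, ψ j (θ k ω) ∂μ := (integral_const_mul _ _).symm
  -- upper bound on the integral
  have hRknonneg : 0 ≤ R k := by
    rw [hR]
    exact integral_nonneg fun ω => sq_nonneg _
  have hub : ∫ ω, (J : ℝ)⁻¹ * ∑ j, ψ j (θ k ω) ∂μ ≤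
      (-2 * η * lammin + η ^ 2 * (lam₀ ^ 2 + Λ ^ 2 - lammin ^ 2)) * R k
        + 2 * η ^ 2 * Λ * D₀ * ∫ ω, ‖θ k ω - θdag‖ ∂μ + η ^ 2 * D₀ ^ 2 := by
    have hIub : Integrable (fun ω =>
        (-2 * η * lammin + η ^ 2 * (lam₀ ^ 2 + Λ ^ 2 - lammin ^ 2)) * ‖θ k ω - θdag‖ ^ 2
          + 2 * η ^ 2 * Λ * D₀ * ‖θ k ω - θdag‖ + η ^ 2 * D₀ ^ 2) μ :=
      ((hr2int.const_mul _).add (hrint.const_mul _)).add (integrable_const _)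
    have hImono := integral_mono
      ((integrable_finset_sum (μ := μ) Finset.univ fun j _ => hψint j).const_mul ((J : ℝ)⁻¹))
      hIub (fun ω => avg (θ k ω))
    calc ∫ ω, (J : ℝ)⁻¹ * ∑ j, ψ j (θ k ω) ∂μ ≤ _ := hImono
      _ = (-2 * η * lammin + η ^ 2 * (lam₀ ^ 2 + Λ ^ 2 - lammin ^ 2)) * R k
          + 2 * η ^ 2 * Λ * D₀ * ∫ ω, ‖θ k ω - θdag‖ ∂μ + η ^ 2 * D₀ ^ 2 := by
        have hI12 : Integrable (fun ω =>
            (-2 * η * lammin + η ^ 2 * (lam₀ ^ 2 + Λ ^ 2 - lammin ^ 2)) * ‖θ k ω - θdag‖ ^ 2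
              + 2 * η ^ 2 * Λ * D₀ * ‖θ k ω - θdag‖) μ := by
          exact (hr2int.const_mul _).add (hrint.const_mul _)
        rw [integral_add hI12 (integrable_const _),
          integral_add (hr2int.const_mul _) (hrint.const_mul _),
          integral_const_mul, integral_const_mul, integral_const, hR]
        simp [measure_univ]
  -- Jensen: ∫ r ≤ sqrt (R k)
  have hjensen : ∫ ω, ‖θ k ω - θdag‖ ∂μ ≤ Real.sqrt (R k) := by
    set m := ∫ ω, ‖θ k ω - θdag‖ ∂μ with hm
    have hm0 : 0 ≤ m := integral_nonneg fun ω => norm_nonneg _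
    have hexp : ∫ ω, (‖θ k ω - θdag‖ - m) ^ 2 ∂μ = R k - m ^ 2 := by
      have h1 : ∫ ω, (‖θ k ω - θdag‖ - m) ^ 2 ∂μ
          = ∫ ω, (‖θ k ω - θdag‖ ^ 2 - (2 * m) * ‖θ k ω - θdag‖ + m ^ 2) ∂μ := by
        refine integral_congr_ae ?_
        filter_upwards with ω
        ring
      have hI12 : Integrable (fun ω =>
          ‖θ k ω - θdag‖ ^ 2 - (2 * m) * ‖θ k ω - θdag‖) μ := by
        exact hr2int.sub (hrint.const_mul _)
      rw [h1, integral_add hI12 (integrable_const _),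
        integral_sub hr2int (hrint.const_mul _), integral_const_mul, integral_const, hR]
      simp [measure_univ]
      ring
    have h0 : 0 ≤ R k - m ^ 2 := by
      rw [← hexp]
      exact integral_nonneg fun ω => sq_nonneg _
    have hmsq : m ^ 2 ≤ R k := by linarith
    calc m = Real.sqrt (m ^ 2) := (Real.sqrt_sq hm0).symm
      _ ≤ Real.sqrt (R k) := Real.sqrt_le_sqrt hmsq
  -- conclusion
  rw [hRrec, hmain]
  have hcoef : (0:ℝ) ≤ 2 * η ^ 2 * Λ * D₀ := by positivity
  calc ∫ ω, (J : ℝ)⁻¹ * ∑ j, ψ j (θ k ω) ∂μ ≤ _ := hub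
    _ ≤ (-2 * η * lammin + η ^ 2 * (lam₀ ^ 2 + Λ ^ 2 - lammin ^ 2)) * R k
        + 2 * η ^ 2 * Λ * D₀ * Real.sqrt (R k) + η ^ 2 * D₀ ^ 2 := by
      have := mul_le_mul_of_nonneg_left hjensen hcoef
      linarith
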